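/- Let F_A be a free group on a nonempty set A and let κ = |F_A|. Then F_A admits no maximal left invariant κ-bounded topology; that is, there is no topology τ on F_A such that (F_A, τ) is left topological, every nonempty τ-open set is left κ-large, τ has no isolated points, and every topology strictly finer than τ has an isolated point. -/

import Mathlib

open scoped Pointwise
open Cardinal

universe u

variable {G : Type u}

/-- `A` is left `κ`-large: `G = F * A` for some `F` with `|F| < κ`. -/
def LeftLarge [Group G] (κ : Cardinal.{u}) (A : Set G) : Prop :=
  ∃ F : Set G, #F < κ ∧ F * A = Set.univ

/-- `A` is right `κ`-large: `G = A * F` for some `F` with `|F| < κ`. -/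
def RightLarge [Group G] (κ : Cardinal.{u}) (A : Set G) : Prop :=
  ∃ F : Set G, #F < κ ∧ A * F = Set.univ

/-- `A` is `κ`-large: `G = F * A * F` for some `F` with `|F| < κ`. -/
def KLarge [Group G] (κ : Cardinal.{u}) (A : Set G) : Prop :=
  ∃ F : Set G, #F < κ ∧ F * A * F = Set.univ

/-- `A` is left `κ`-thick: for every `F` with `|F| < κ` there is `a ∈ A` with `F * a ⊆ A`. -/
def LeftThick [Group G] (κ : Cardinal.{u}) (A : Set G) : Prop :=
  ∀ F : Set G, #F < κ → ∃ a ∈ A, F * {a} ⊆ A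

/-- `A` is right `κ`-thick: for every `F` with `|F| < κ` there is `a ∈ A` with `a * F ⊆ A`. -/
def RightThick [Group G] (κ : Cardinal.{u}) (A : Set G) : Prop :=
  ∀ F : Set G, #F < κ → ∃ a ∈ A, {a} * F ⊆ A

/-- `A` is `κ`-thick: for every `F` with `|F| < κ` there is `a ∈ A` with `F * a * F ⊆ A`. -/
def KThick [Group G] (κ : Cardinal.{u}) (A : Set G) : Prop :=
  ∀ F : Set G, #F < κ → ∃ a ∈ A, F * {a} * F ⊆ A

/-- `G` is `κ`-normal: every subset of size `< κ` lies in a normal subgroup of size `< κ`. -/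
def KNormal (G : Type u) [Group G] (κ : Cardinal.{u}) : Prop :=
  ∀ F : Set G, #F < κ → ∃ H : Subgroup G, H.Normal ∧ #(H : Set G) < κ ∧ F ⊆ (H : Set G)

/-- `κ` is a singular cardinal: infinite, with cofinality strictly less than `κ`. -/
def Singular (κ : Cardinal.{u}) : Prop := ℵ₀ ≤ κ ∧ κ.ord.cof < κ

/-- A topology on a group is left invariant if all left shifts are continuous. -/
def LeftInvariant [Group G] (τ : TopologicalSpace G) : Prop :=
  ∀ g : G, @Continuous G G τ τ fun x => g * x

/-- A topology on a group of cardinality `κ` is `κ`-bounded if every nonempty open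
set is left `κ`-large. -/
def KBounded [Group G] (κ : Cardinal.{u}) (τ : TopologicalSpace G) : Prop :=
  ∀ U : Set G, τ.IsOpen U → U.Nonempty → LeftLarge κ U

/-- A topology has no isolated points if no singleton is open. -/
def NoIsolatedPoints (τ : TopologicalSpace G) : Prop :=
  ∀ x : G, ¬ τ.IsOpen {x}

/-- A topology (with no isolated points) is maximal if every strictly finer topology
has an isolated point (an open singleton). -/
def MaximalTopology (τ : TopologicalSpace G) : Prop :=
  ∀ τ' : TopologicalSpace G,
    (∀ U : Set G, τ.IsOpen U → τ'.IsOpen U) →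
    (∃ V : Set G, τ'.IsOpen V ∧ ¬ τ.IsOpen V) →
    ∃ x : G, τ'.IsOpen {x}

section Aux

/-- A left `κ`-large set meets every left `κ`-thick set. -/
lemma leftLarge_inter_leftThick [Group G] {κ : Cardinal.{u}} {S T : Set G}
    (hS : LeftLarge κ S) (hT : LeftThick κ T) : (S ∩ T).Nonempty := by
  obtain ⟨F, hF, hFS⟩ := hS
  have hFinv : #(F⁻¹ : Set G) < κ := by
    have himg : (F⁻¹ : Set G) = (fun g : G => g⁻¹) '' F := by
      ext z
      simp only [Set.mem_inv, Set.mem_image]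
      exact ⟨fun h => ⟨z⁻¹, h, inv_inv z⟩, fun ⟨w, hw, hwz⟩ => by
        rw [← hwz, inv_inv]; exact hw⟩
    calc #(F⁻¹ : Set G) = #((fun g : G => g⁻¹) '' F) := by rw [himg]
    _ ≤ #F := Cardinal.mk_image_le
    _ < κ := hF
  obtain ⟨a, haT, haF⟩ := hT F⁻¹ hFinv
  have haU : a ∈ F * S := by rw [hFS]; trivial
  obtain ⟨f, hf, s, hs, hfs⟩ := Set.mem_mul.1 haU
  have h1 : f⁻¹ * a ∈ T := by
    apply haF
    exact Set.mul_mem_mul (Set.inv_mem_inv.2 hf) rfl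
  have h2 : f⁻¹ * a = s := by rw [← hfs]; group
  exact ⟨s, hs, h2 ▸ h1⟩

/-- If `V` is left `κ`-large and `V \ {x} ⊆ W` with `W` nonempty, then `W` is
left `κ`-large. -/
lemma leftLarge_of_diff_singleton [Group G] {κ : Cardinal.{u}} (hκ : ℵ₀ ≤ κ)
    {V W : Set G} {x : G} (hV : LeftLarge κ V) (hW : W.Nonempty)
    (hsub : V \ {x} ⊆ W) : LeftLarge κ W := by
  obtain ⟨F, hF, hFV⟩ := hV
  obtain ⟨q, hq⟩ := hW
  refine ⟨F ∪ (fun f : G => f * x * q⁻¹) '' F, ?_, ?_⟩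
  · calc #(F ∪ (fun f : G => f * x * q⁻¹) '' F : Set G)
        ≤ #F + #((fun f : G => f * x * q⁻¹) '' F) := Cardinal.mk_union_le _ _
    _ < κ := Cardinal.add_lt_of_lt hκ hF (lt_of_le_of_lt Cardinal.mk_image_le hF)
  · apply Set.eq_univ_of_forall
    intro g
    have : g ∈ F * V := by rw [hFV]; trivial
    obtain ⟨f, hf, v, hv, hfv⟩ := Set.mem_mul.1 this
    by_cases hvx : v = x
    · refine Set.mem_mul.2 ⟨f * x * q⁻¹, Or.inr ⟨f, hf, rfl⟩, q, hq, ?_⟩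
      rw [← hfv, hvx]; group
    · exact Set.mem_mul.2 ⟨f, Or.inl hf, v, hsub ⟨hv, hvx⟩, hfv⟩

/-- Abstract core: no maximal `κ`-bounded topology exists on a group possessing
a subset `P` such that both `P` and `Pᶜ` are left `κ`-thick. -/
lemma no_max_of_thick_pair [Group G] {κ : Cardinal.{u}} (hκ : ℵ₀ ≤ κ)
    {P : Set G} (hP : LeftThick κ P) (hPc : LeftThick κ Pᶜ)
    (τ : TopologicalSpace G) (hbnd : KBounded κ τ) (hni : NoIsolatedPoints τ)
    (hmax : MaximalTopology τ) : False := by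
  have h0 : #(∅ : Set G) < κ := by
    rw [Cardinal.mk_emptyCollection]
    exact lt_of_lt_of_le Cardinal.aleph0_pos hκ
  obtain ⟨p0, hp0, -⟩ := hP ∅ h0
  obtain ⟨q0, hq0, -⟩ := hPc ∅ h0
  have hPnl : ¬ LeftLarge κ P := fun h => by
    obtain ⟨z, hz1, hz2⟩ := leftLarge_inter_leftThick h hPc
    exact hz2 hz1
  have hPcnl : ¬ LeftLarge κ Pᶜ := fun h => by
    obtain ⟨z, hz1, hz2⟩ := leftLarge_inter_leftThick h hP
    exact hz1 hz2
  have hPno : ¬ τ.IsOpen P := fun h => hPnl (hbnd P h ⟨p0, hp0⟩)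
  have hemp : τ.IsOpen ∅ := by letI := τ; exact isOpen_empty
  have hun : ∀ U V : Set G, τ.IsOpen U → τ.IsOpen V → τ.IsOpen (U ∪ V) :=
    fun U V hU hV => by letI := τ; exact IsOpen.union hU hV
  have hiUn : ∀ {ι : Type u} (g : ι → Set G), (∀ i, τ.IsOpen (g i)) →
      τ.IsOpen (⋃ i, g i) := by
    intro ι g hg
    letI := τ
    exact isOpen_iUnion hg
  -- the refined topology whose opens are `U ∪ (V ∩ P)` with `U`, `V` τ-open
  set τ' : TopologicalSpace G :=
    { IsOpen := fun W => ∃ U V : Set G, τ.IsOpen U ∧ τ.IsOpen V ∧ W = U ∪ V ∩ P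
      isOpen_univ := ⟨Set.univ, ∅, τ.isOpen_univ, hemp, by simp⟩
      isOpen_inter := by
        rintro W₁ W₂ ⟨U₁, V₁, hU₁, hV₁, rfl⟩ ⟨U₂, V₂, hU₂, hV₂, rfl⟩
        refine ⟨U₁ ∩ U₂, U₁ ∩ V₂ ∪ V₁ ∩ U₂ ∪ V₁ ∩ V₂,
          τ.isOpen_inter _ _ hU₁ hU₂, ?_, ?_⟩
        · exact hun _ _ (hun _ _
            (τ.isOpen_inter _ _ hU₁ hV₂) (τ.isOpen_inter _ _ hV₁ hU₂))
            (τ.isOpen_inter _ _ hV₁ hV₂)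
        · ext z; by_cases hz : z ∈ P <;> simp [hz] <;> try tauto
      isOpen_sUnion := by
        intro S hS
        refine ⟨⋃ t : S, (hS t t.2).choose,
          ⋃ t : S, (hS t t.2).choose_spec.choose,
          hiUn _ (fun t => (hS t t.2).choose_spec.choose_spec.1),
          hiUn _ (fun t => (hS t t.2).choose_spec.choose_spec.2.1), ?_⟩
        rw [Set.sUnion_eq_iUnion, Set.iUnion_inter, ← Set.iUnion_union_distrib]
        exact Set.iUnion_congr fun t => (hS t t.2).choose_spec.choose_spec.2.2 }
  have hfiner : ∀ U : Set G, τ.IsOpen U → τ'.IsOpen U := fun U hU =>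
    ⟨U, ∅, hU, hemp, by simp⟩
  have hPopen' : τ'.IsOpen P := ⟨∅, Set.univ, hemp, τ.isOpen_univ, by simp⟩
  obtain ⟨x, hx⟩ := hmax τ' hfiner ⟨P, hPopen', hPno⟩
  obtain ⟨U, V, hU, hV, hxUV⟩ := hx
  have hUsub : U ⊆ {x} := by rw [hxUV]; exact Set.subset_union_left
  by_cases hxU : x ∈ U
  · have : U = {x} := Set.Subset.antisymm hUsub (by
      intro y hy; rw [Set.mem_singleton_iff] at hy; rw [hy]; exact hxU)
    exact hni x (this ▸ hU)
  · have hUe : U = ∅ := by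
      apply Set.eq_empty_of_subset_empty
      intro y hy
      exact absurd (hUsub hy ▸ hy) hxU
    rw [hUe, Set.empty_union] at hxUV
    have hxVP : x ∈ V ∩ P := by rw [← hxUV]; rfl
    have hVlarge : LeftLarge κ V := hbnd V hV ⟨x, hxVP.1⟩
    have hsub : V \ {x} ⊆ Pᶜ := by
      rintro y ⟨hyV, hyx⟩ hyP
      apply hyx
      have : y ∈ ({x} : Set G) := by rw [hxUV]; exact ⟨hyV, hyP⟩
      exact this
    exact hPcnl (leftLarge_of_diff_singleton hκ hVlarge ⟨q0, hq0⟩ hsub)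

end Aux

section FreeGroupAux

variable {α : Type u} [DecidableEq α]

lemma reduce_cons_eq (p : α × Bool) (L : List (α × Bool))
    (hL : FreeGroup.reduce L = L)
    (h : ∀ q ∈ L.head?, ¬(p.1 = q.1 ∧ p.2 = !q.2)) :
    FreeGroup.reduce (p :: L) = p :: L := by
  rw [FreeGroup.reduce.cons, hL]
  cases L with
  | nil => rfl
  | cons hd tl =>
      have := h hd rfl
      simp only [List.casesOn]
      rw [if_neg this]

lemma toWord_single_mul (x : α) (b : Bool) (f : FreeGroup α)
    (h : ∀ q ∈ f.toWord.head?, q.1 ≠ x) :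
    (FreeGroup.mk [(x, b)] * f).toWord = (x, b) :: f.toWord := by
  conv_lhs => rw [← FreeGroup.mk_toWord (x := f)]
  rw [FreeGroup.mul_mk, List.singleton_append, FreeGroup.toWord_mk]
  exact reduce_cons_eq _ _ f.reduce_toWord
    (fun q hq hc => (h q hq) hc.1.symm)

lemma norm_ge_of_mul (f a : FreeGroup α) :
    a.norm ≤ f.norm + (f * a).norm := by
  have h := FreeGroup.norm_mul_le f⁻¹ (f * a)
  rwa [inv_mul_cancel_left, FreeGroup.norm_inv_eq] at h

end FreeGroupAux

/-- In a free group on a nonempty set, there is a set `P` with both `P` and `Pᶜ`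
left `κ`-thick for `κ = #(FreeGroup A)`. -/
lemma freeGroup_exists_thick_pair (A : Type u) [Nonempty A] :
    ∃ P : Set (FreeGroup A),
      LeftThick (#(FreeGroup A)) P ∧ LeftThick (#(FreeGroup A)) Pᶜ := by
  classical
  rcases le_or_gt (#A) ℵ₀ with hA | hA
  · -- countable case: use blocks of norms
    have hκ : #(FreeGroup A) = ℵ₀ := by
      rw [Cardinal.mk_freeGroup, max_eq_right hA]
    refine ⟨{w : FreeGroup A | ∃ k : ℕ, 4 ^ k ≤ w.norm ∧ w.norm < 2 * 4 ^ k}, ?_, ?_⟩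
    · intro F hF
      rw [hκ, Cardinal.lt_aleph0_iff_set_finite] at hF
      obtain ⟨m, hm⟩ := (hF.image FreeGroup.norm).bddAbove
      simp only [mem_upperBounds, Set.mem_image] at hm
      set k := 2 * m + 2 with hk
      have h4 : 2 * m + 2 < 4 ^ k := by
        calc 2 * m + 2 = k := rfl
        _ < 2 ^ k := Nat.lt_two_pow_self (n := k)
        _ ≤ 4 ^ k := Nat.pow_le_pow_left (by norm_num) k
      obtain ⟨a, ha⟩ := FreeGroup.norm_surjective (α := A) (4 ^ k + m)
      refine ⟨a, ⟨k, by omega, by omega⟩, ?_⟩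
      rintro g hg
      obtain ⟨f, hf, a', ha', rfl⟩ := Set.mem_mul.1 hg
      rw [Set.mem_singleton_iff] at ha'; subst ha'
      have hfm : f.norm ≤ m := hm _ ⟨f, hf, rfl⟩
      have h1 := norm_ge_of_mul f a'
      have h2 := FreeGroup.norm_mul_le f a'
      exact ⟨k, by omega, by omega⟩
    · intro F hF
      rw [hκ, Cardinal.lt_aleph0_iff_set_finite] at hF
      obtain ⟨m, hm⟩ := (hF.image FreeGroup.norm).bddAbove
      simp only [mem_upperBounds, Set.mem_image] at hm
      set k := 2 * m + 2 with hk
      have h4 : 2 * m + 2 < 4 ^ k := by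
        calc 2 * m + 2 = k := rfl
        _ < 2 ^ k := Nat.lt_two_pow_self (n := k)
        _ ≤ 4 ^ k := Nat.pow_le_pow_left (by norm_num) k
      have hnot : ∀ n : ℕ, 2 * 4 ^ k ≤ n → n < 4 ^ (k + 1) →
          ∀ j : ℕ, ¬(4 ^ j ≤ n ∧ n < 2 * 4 ^ j) := by
        rintro n h1 h2 j ⟨hj1, hj2⟩
        rcases le_or_gt j k with hjk | hjk
        · have : (4 : ℕ) ^ j ≤ 4 ^ k := Nat.pow_le_pow_right (by norm_num) hjk
          omega
        · have : (4 : ℕ) ^ (k + 1) ≤ 4 ^ j := Nat.pow_le_pow_right (by norm_num) hjk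
          omega
      have hps : (4 : ℕ) ^ (k + 1) = 4 * 4 ^ k := by rw [pow_succ]; ring
      obtain ⟨a, ha⟩ := FreeGroup.norm_surjective (α := A) (2 * 4 ^ k + m)
      refine ⟨a, ?_, ?_⟩
      · intro hamem
        obtain ⟨j, hj⟩ := hamem
        exact hnot a.norm (by omega) (by omega) j hj
      · rintro g hg
        obtain ⟨f, hf, a', ha', rfl⟩ := Set.mem_mul.1 hg
        rw [Set.mem_singleton_iff] at ha'; subst ha'
        have hfm : f.norm ≤ m := hm _ ⟨f, hf, rfl⟩
        have h1 := norm_ge_of_mul f a'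
        have h2 := FreeGroup.norm_mul_le f a'
        intro hmem
        obtain ⟨j, hj⟩ := hmem
        exact hnot (f * a').norm (by omega) (by omega) j hj
  · -- uncountable case: use a fresh letter
    have hκ : #(FreeGroup A) = #A := by
      rw [Cardinal.mk_freeGroup, max_eq_left hA.le]
    set P : Set (FreeGroup A) :=
      {w : FreeGroup A | ∃ y : A, w⁻¹.toWord.head? = some (y, false)} with hPdef
    have key : ∀ F : Set (FreeGroup A), #F < #(FreeGroup A) →
        ∃ x : A, ∀ f ∈ F, ∀ q ∈ (f⁻¹ : FreeGroup A).toWord.head?, q.1 ≠ x := by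
      intro F hF
      rw [hκ] at hF
      set used : Set A := ⋃ f ∈ F, {y : A | ∃ b : Bool, (y, b) ∈ (f⁻¹ : FreeGroup A).toWord}
        with husdef
      have hused : #used < #A := by
        have hb : #used ≤ #F * ⨆ f : F, #{y : A | ∃ b : Bool, (y, b) ∈ ((f : FreeGroup A))⁻¹.toWord} :=
          Cardinal.mk_biUnion_le _ _
        have hsup : (⨆ f : F, #{y : A | ∃ b : Bool, (y, b) ∈ ((f : FreeGroup A))⁻¹.toWord}) ≤ ℵ₀ := by
          apply ciSup_le'
          intro f
          have hfin : {y : A | ∃ b : Bool, (y, b) ∈ ((f : FreeGroup A))⁻¹.toWord}.Finite := by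
            have : {y : A | ∃ b : Bool, (y, b) ∈ ((f : FreeGroup A))⁻¹.toWord} ⊆
                Prod.fst '' {p | p ∈ ((f : FreeGroup A))⁻¹.toWord} := by
              rintro y ⟨b, hb⟩
              exact ⟨(y, b), hb, rfl⟩
            exact (((f : FreeGroup A))⁻¹.toWord.finite_toSet.image Prod.fst).subset this
          exact hfin.lt_aleph0.le
        calc #used ≤ #F * ℵ₀ := hb.trans (mul_le_mul_right hsup _)
        _ ≤ max (max (#F) ℵ₀) ℵ₀ := Cardinal.mul_le_max _ _
        _ < #A := by
            simp only [max_lt_iff]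
            exact ⟨⟨hF, hA⟩, hA⟩
      have : used ≠ Set.univ := by
        intro h
        rw [h, Cardinal.mk_univ] at hused
        exact lt_irrefl _ hused
      obtain ⟨x, hx⟩ := Set.ne_univ_iff_exists_notMem _ |>.1 this
      refine ⟨x, ?_⟩
      intro f hf q hq hq1
      apply hx
      refine Set.mem_biUnion hf ⟨q.2, ?_⟩
      have hmem : q ∈ (f⁻¹ : FreeGroup A).toWord := List.mem_of_mem_head? hq
      have : (x, q.2) = q := by
        rw [← hq1]
      rw [this]
      exact hmem
    have hofmk : ∀ (x : A) (b : Bool), (FreeGroup.of x : FreeGroup A) = FreeGroup.mk [(x, true)] := by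
      intro x _; rfl
    have hofinv : ∀ x : A, (FreeGroup.of x : FreeGroup A)⁻¹ = FreeGroup.mk [(x, false)] := by
      intro x
      rw [hofmk x true, FreeGroup.inv_mk]
      simp [FreeGroup.invRev]
    refine ⟨P, ?_, ?_⟩
    · intro F hF
      obtain ⟨x, hx⟩ := key F hF
      refine ⟨FreeGroup.of x, ?_, ?_⟩
      · refine ⟨x, ?_⟩
        rw [hofinv x, FreeGroup.toWord_mk, FreeGroup.reduce_singleton]
        rfl
      · rintro g hg
        obtain ⟨f, hf, a', ha', rfl⟩ := Set.mem_mul.1 hg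
        rw [Set.mem_singleton_iff] at ha'; subst ha'
        refine ⟨x, ?_⟩
        have hinv : (f * FreeGroup.of x)⁻¹ = FreeGroup.mk [(x, false)] * f⁻¹ := by
          rw [mul_inv_rev, hofinv x]
        rw [hinv, toWord_single_mul x false f⁻¹ (hx f hf)]
        rfl
    · intro F hF
      obtain ⟨x, hx⟩ := key F hF
      refine ⟨(FreeGroup.of x)⁻¹, ?_, ?_⟩
      · intro hmem
        obtain ⟨y, hy⟩ := hmem
        rw [inv_inv, hofmk x true, FreeGroup.toWord_mk, FreeGroup.reduce_singleton] at hy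
        simp at hy
      · rintro g hg
        obtain ⟨f, hf, a', ha', rfl⟩ := Set.mem_mul.1 hg
        rw [Set.mem_singleton_iff] at ha'; subst ha'
        intro hmem
        obtain ⟨y, hy⟩ := hmem
        rw [mul_inv_rev, inv_inv, hofmk x true,
          toWord_single_mul x true f⁻¹ (hx f hf)] at hy
        simp at hy

/-- A free group `F_A` on a nonempty set `A` admits no maximal
left invariant `κ`-bounded topology, where `κ = |F_A|`. -/
theorem freeGroup_no_maximal_kBounded_topology (A : Type u) [Nonempty A] :
    ¬ ∃ τ : TopologicalSpace (FreeGroup A),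
        LeftInvariant τ ∧ KBounded (#(FreeGroup A)) τ ∧
        NoIsolatedPoints τ ∧ MaximalTopology τ := by
  rintro ⟨τ, -, hbnd, hni, hmax⟩
  have hκ : ℵ₀ ≤ #(FreeGroup A) := Cardinal.aleph0_le_mk _
  obtain ⟨P, hP, hPc⟩ := freeGroup_exists_thick_pair A
  exact no_max_of_thick_pair hκ hP hPc τ hbnd hni hmax
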